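/- Let k be an algebraically closed field of characteristic p > 0 and let r ≥ 1. For every sequence (M_n)_{n≥0} with M_n ∈ B_r(k((t))^{p^n}) there exists a sequence (A_n)_{n≥0} with A_n ∈ B_r(k[t,t⁻¹]^{p^n}) such that: (i) there exist g_n ∈ B_r(k((t))^{p^n}) with M_n = g_n · A_n · g_{n+1}⁻¹ in GL_r(k((t))) for all n; and (ii) there exist h_n ∈ B_r(k((s))^{p^n}) and invertible diagonal r×r matrices Δ_n with entries in k((s))^{p^n} such that ι(A_n) = h_n · Δ_n · h_{n+1}⁻¹ in GL_r(k((s))) for all n. (This is the key surjectivity statement: every stratified bundle on k((t)) extends to a stratified bundle on 𝔾_m which, over k((t⁻¹)), is a direct sum of rank-one objects, i.e., whose class lies in the image of the diagonal section.) -/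

import Mathlib

/-- The element `t` of `k((t))`; the same element serves as `s` when the Laurent series
field models `k((t⁻¹)) = k((s))`, `t = s⁻¹`. -/
noncomputable def tt (k : Type*) [Field k] : LaurentSeries k := HahnSeries.single 1 1

/-- `M ∈ B_r(k((t))^{pⁿ})`: an upper-triangular matrix whose entries lie in the subring
`k((t))^{pⁿ}` (support consisting of multiples of `pⁿ`) and whose diagonal entries are
units of `k((t))^{pⁿ}` (equivalently, nonzero, since `k((t))^{pⁿ}` is a subfield). -/
def MemBrLaurentSeriesPow (k : Type*) [Field k] (p n r : ℕ)
    (M : Matrix (Fin r) (Fin r) (LaurentSeries k)) : Prop :=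
  (∀ i j : Fin r, (j : ℕ) < (i : ℕ) → M i j = 0) ∧
  (∀ i j : Fin r, ∀ m ∈ (M i j).support, ((p : ℤ) ^ n) ∣ m) ∧
  (∀ i : Fin r, M i i ≠ 0)

/-- `M ∈ B_r(k[t,t⁻¹]^{pⁿ})`: an upper-triangular matrix whose entries are Laurent
polynomials (finite support) with support consisting of multiples of `pⁿ`, and whose
diagonal entries are units of the subring `k[t,t⁻¹]^{pⁿ}`. -/
def MemBrLaurentPolyPow (k : Type*) [Field k] (p n r : ℕ)
    (M : Matrix (Fin r) (Fin r) (LaurentSeries k)) : Prop :=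
  (∀ i j : Fin r, (j : ℕ) < (i : ℕ) → M i j = 0) ∧
  (∀ i j : Fin r, (M i j).support.Finite ∧ ∀ m ∈ (M i j).support, ((p : ℤ) ^ n) ∣ m) ∧
  (∀ i : Fin r, ∃ g : LaurentSeries k,
      g.support.Finite ∧ (∀ m ∈ g.support, ((p : ℤ) ^ n) ∣ m) ∧ M i i * g = 1)

/-- `A'` is obtained from `A` by applying, entrywise, the embedding
`ι : k[t,t⁻¹] → k((s))`, `t ↦ s⁻¹` (coefficientwise reversal). -/
def IsRevMatSeq (k : Type*) [Field k] (r : ℕ)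
    (A A' : ℕ → Matrix (Fin r) (Fin r) (LaurentSeries k)) : Prop :=
  ∀ n (i j : Fin r) (m : ℤ), (A' n i j).coeff m = (A n i j).coeff (-m)

namespace SBEaux

open HahnSeries

variable {k : Type*} [Field k]


variable {k : Type*} [Field k]

/-- Bounded-below sets of integers are partially well ordered. -/
lemma bddBelow_isPWO (s : Set ℤ) (h : BddBelow s) : s.IsPWO := by
  refine Set.IsWF.isPWO ?_
  rw [Set.isWF_iff_no_descending_seq]
  intro f hf hmem
  obtain ⟨β, hβ⟩ := h
  have key : ∀ n : ℕ, f n ≤ f 0 - n := by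
    intro n
    induction n with
    | zero => simp
    | succ m ih =>
      have h2 : f (m + 1) < f m := hf (Nat.lt_succ_self m)
      push_cast
      omega
  have h1 : β ≤ f (f 0 - β + 1).toNat := hβ (hmem _)
  have h2 := key (f 0 - β + 1).toNat
  omega

/-- Level predicate: every exponent in the support is divisible by `P`. -/
def Lev (P : ℤ) (x : LaurentSeries k) : Prop := ∀ m : ℤ, x.coeff m ≠ 0 → P ∣ m

lemma Lev.zero (P : ℤ) : Lev P (0 : LaurentSeries k) := by
  intro m hm; simp at hm

lemma Lev.add {P : ℤ} {x y : LaurentSeries k} (hx : Lev P x) (hy : Lev P y) :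
    Lev P (x + y) := by
  intro m hm
  rw [HahnSeries.coeff_add] at hm
  by_cases h : x.coeff m ≠ 0
  · exact hx m h
  · push_neg at h
    exact hy m (by intro h'; rw [h, h'] at hm; simp at hm)

lemma Lev.neg {P : ℤ} {x : LaurentSeries k} (hx : Lev P x) : Lev P (-x) := by
  intro m hm
  rw [HahnSeries.coeff_neg] at hm
  exact hx m (by simpa using hm)

lemma Lev.sub {P : ℤ} {x y : LaurentSeries k} (hx : Lev P x) (hy : Lev P y) :
    Lev P (x - y) := by
  rw [sub_eq_add_neg]; exact hx.add hy.neg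

lemma Lev.mul {P : ℤ} {x y : LaurentSeries k} (hx : Lev P x) (hy : Lev P y) :
    Lev P (x * y) := by
  intro m hm
  have hmem : m ∈ (x * y).support := by rwa [HahnSeries.mem_support]
  obtain ⟨a2, ha, b2, hb, rfl⟩ := Set.mem_add.mp (HahnSeries.support_mul_subset hmem)
  exact dvd_add (hx a2 (by rwa [HahnSeries.mem_support] at ha))
    (hy b2 (by rwa [HahnSeries.mem_support] at hb))

lemma Lev.single {P : ℤ} {s : ℤ} (hs : P ∣ s) (r : k) :
    Lev P (HahnSeries.single s r : LaurentSeries k) := by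
  intro m hm
  have : m ∈ (HahnSeries.single s r : LaurentSeries k).support := by rwa [HahnSeries.mem_support]
  rw [HahnSeries.eq_of_mem_support_single this]
  exact hs

lemma Lev.one (P : ℤ) : Lev P (1 : LaurentSeries k) := by
  rw [← HahnSeries.single_zero_one]
  exact Lev.single (dvd_zero P) 1

lemma Lev.sum {P : ℤ} {ι : Type*} (s : Finset ι) (F : ι → LaurentSeries k)
    (h : ∀ i ∈ s, Lev P (F i)) : Lev P (∑ i ∈ s, F i) := by
  classical
  induction s using Finset.induction_on with
  | empty => simpa using Lev.zero P
  | insert _ _ hx ih =>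
    rw [Finset.sum_insert hx]
    exact (h _ (Finset.mem_insert_self _ _)).add
      (ih fun i hi => h i (Finset.mem_insert_of_mem hi))

lemma Lev.of_dvd {P Q : ℤ} (hPQ : Q ∣ P) {x : LaurentSeries k} (hx : Lev P x) : Lev Q x :=
  fun m hm => dvd_trans hPQ (hx m hm)

/-- coefficient formula for multiplication by a single on the left. -/
lemma single_mul_coeff (s : ℤ) (r : k) (x : LaurentSeries k) (m : ℤ) :
    (HahnSeries.single s r * x).coeff m = r * x.coeff (m - s) := by
  have := HahnSeries.coeff_single_mul_add (r := r) (x := x) (a := m - s) (b := s)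
  simpa using this

lemma mul_single_coeff (s : ℤ) (r : k) (x : LaurentSeries k) (m : ℤ) :
    (x * HahnSeries.single s r).coeff m = x.coeff (m - s) * r := by
  have := HahnSeries.coeff_mul_single_add (r := r) (x := x) (a := m - s) (b := s)
  simpa using this

/-- The set of support elements below a bound is finite. -/
lemma finite_low_support (x : LaurentSeries k) (β : ℤ) :
    {m : ℤ | x.coeff m ≠ 0 ∧ m < β}.Finite := by
  rcases eq_or_ne x 0 with rfl | hx
  · simpa using Set.finite_empty.subset (by intro m hm; simp at hm; exact hm.1 rfl)
  · apply (Set.finite_Icc x.order β).subset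
    intro m hm
    exact Set.mem_Icc.mpr ⟨HahnSeries.order_le_of_coeff_ne_zero hm.1, le_of_lt hm.2⟩

section Core

variable (p : ℕ)

lemma Tdiff {T : ℕ → ℤ} (hT : ∀ n, ((p:ℤ))^n ∣ T (n+1) - T n) :
    ∀ n m : ℕ, n ≤ m → ((p:ℤ))^n ∣ T m - T n := by
  intro n m hnm
  induction m with
  | zero =>
    have : n = 0 := Nat.le_zero.mp hnm
    subst this; simp
  | succ m ih =>
    rcases Nat.lt_or_ge n (m+1) with h | h
    · have h' : n ≤ m := Nat.lt_succ_iff.mp h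
      have d1 : ((p:ℤ))^n ∣ T (m+1) - T m := dvd_trans (pow_dvd_pow _ h') (hT m)
      have d2 := dvd_add d1 (ih h')
      have heq : T (m+1) - T m + (T m - T n) = T (m+1) - T n := by ring
      rwa [heq] at d2
    · have : n = m + 1 := le_antisymm hnm h
      subst this; simp

lemma core2norm (hp : 1 < p) (T : ℕ → ℤ) (hT : ∀ n, ((p:ℤ))^n ∣ T (n+1) - T n)
    (Y : ℕ → LaurentSeries k)
    (hY : ∀ n q, (Y n).coeff q ≠ 0 → ((p:ℤ))^n ∣ q + T n)
    (hneg : ∀ n q, q < 0 → (¬ ∀ m, ((p:ℤ))^m ∣ q + T m) → (Y n).coeff q = 0) :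
    ∃ W : ℕ → LaurentSeries k,
      (∀ n, W n - W (n+1) = Y n) ∧ (∀ n q, (W n).coeff q ≠ 0 → ((p:ℤ))^n ∣ q + T n) := by
  classical
  set L : Set ℤ := {q | ∀ m, ((p:ℤ))^m ∣ q + T m} with hL
  have hpow : ∀ d : ℤ, d ≠ 0 → ∃ m : ℕ, ¬ ((p:ℤ))^m ∣ d := by
    intro d hd
    refine ⟨d.natAbs + 1, fun hdvd => ?_⟩
    have h1 : ((p:ℤ))^(d.natAbs+1) ≤ |d| :=
      Int.le_of_dvd (abs_pos.mpr hd) ((dvd_abs _ _).mpr hdvd)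
    have h2 : ((d.natAbs + 1 : ℕ) : ℤ) < ((p:ℤ))^(d.natAbs+1) := by
      exact_mod_cast Nat.lt_pow_self (n := d.natAbs + 1) hp
    rw [Int.abs_eq_natAbs] at h1
    have h4 := lt_of_lt_of_le h2 h1
    omega
  have hLuniq : ∀ q₁ q₂, q₁ ∈ L → q₂ ∈ L → q₁ = q₂ := by
    intro q₁ q₂ h1 h2
    by_contra hne
    obtain ⟨m, hm⟩ := hpow (q₁ - q₂) (sub_ne_zero.mpr hne)
    apply hm
    have := dvd_sub (h1 m) (h2 m)
    have heq : q₁ + T m - (q₂ + T m) = q₁ - q₂ := by ring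
    rwa [heq] at this
  set N : ℤ → ℕ := fun q => sInf {m | ¬ ((p:ℤ))^m ∣ q + T m} with hN
  have hNmem : ∀ q, q ∉ L → ¬ ((p:ℤ))^(N q) ∣ q + T (N q) := by
    intro q hq
    have : {m | ¬ ((p:ℤ))^m ∣ q + T m}.Nonempty := by
      rw [hL] at hq
      simp only [Set.mem_setOf_eq, not_forall] at hq
      obtain ⟨m, hm⟩ := hq
      exact ⟨m, hm⟩
    exact Nat.sInf_mem this
  have hNge : ∀ q, q ∉ L → ∀ m, N q ≤ m → ¬ ((p:ℤ))^m ∣ q + T m := by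
    intro q hq m hm hdvd
    apply hNmem q hq
    have h1 : ((p:ℤ))^(N q) ∣ q + T m := dvd_trans (pow_dvd_pow _ hm) hdvd
    have h2 := Tdiff p hT (N q) m hm
    have := dvd_sub h1 h2
    have heq : q + T m - (T m - T (N q)) = q + T (N q) := by ring
    rwa [heq] at this
  set Wf : ℕ → ℤ → k := fun n q =>
    if q ∈ L then -∑ m ∈ Finset.range n, (Y m).coeff q
    else ∑ m ∈ Finset.Ico n (N q), (Y m).coeff q with hWf
  have hsupp : ∀ n, Function.support (Wf n) ⊆ L ∪ {q | 0 ≤ q} := by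
    intro n q hq
    by_cases hqL : q ∈ L
    · exact Or.inl hqL
    right
    by_contra hq0
    simp only [Set.mem_setOf_eq, not_le] at hq0
    apply hq
    simp only [hWf, if_neg hqL]
    apply Finset.sum_eq_zero
    intro m _
    exact hneg m q (by omega) (by simpa [hL] using hqL)
  have hbdd : ∀ n, BddBelow (Function.support (Wf n)) := by
    intro n
    by_cases hLe : L.Nonempty
    · obtain ⟨q₀, hq₀⟩ := hLe
      refine ⟨min q₀ 0, fun q hq => ?_⟩
      rcases hsupp n hq with h | h
      · have := hLuniq q q₀ h hq₀; omega
      · simp only [Set.mem_setOf_eq] at h; omega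
    · refine ⟨0, fun q hq => ?_⟩
      rcases hsupp n hq with h | h
      · exact absurd ⟨q, h⟩ hLe
      · simpa using h
  refine ⟨fun n => ⟨Wf n, bddBelow_isPWO _ (hbdd n)⟩, ?_, ?_⟩
  · intro n
    ext q
    rw [HahnSeries.coeff_sub]
    show Wf n q - Wf (n+1) q = (Y n).coeff q
    by_cases hqL : q ∈ L
    · simp only [hWf, if_pos hqL, Finset.sum_range_succ]; ring
    · simp only [hWf, if_neg hqL]
      rcases Nat.lt_or_ge n (N q) with h | h
      · rw [Finset.sum_eq_sum_Ico_succ_bot h]; ring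
      · rw [Finset.Ico_eq_empty (by omega), Finset.Ico_eq_empty (by omega), Finset.sum_empty]
        have hz : (Y n).coeff q = 0 := by
          by_contra hc
          exact hNge q hqL n h (hY n q hc)
        rw [hz]; ring
  · intro n q hq
    have hq' : Wf n q ≠ 0 := hq
    by_cases hqL : q ∈ L
    · exact hqL n
    · have : ∃ m ∈ Finset.Ico n (N q), (Y m).coeff q ≠ 0 := by
        by_contra hc
        push_neg at hc
        exact hq' (by simp only [hWf, if_neg hqL]; exact Finset.sum_eq_zero hc)
      obtain ⟨m, hm, hYm⟩ := this
      have hmn : n ≤ m := (Finset.mem_Ico.mp hm).1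
      have h1 : ((p:ℤ))^n ∣ q + T m := dvd_trans (pow_dvd_pow _ hmn) (hY m q hYm)
      have h2 := Tdiff p hT n m hmn
      have := dvd_sub h1 h2
      have heq : q + T m - (T m - T n) = q + T n := by ring
      rwa [heq] at this

end Core
lemma core2 (p : ℕ) (hp : 1 < p) (a b : ℕ → ℤ)
    (ha : ∀ n, ((p:ℤ))^n ∣ a n) (hb : ∀ n, ((p:ℤ))^n ∣ b n)
    (c e : ℕ → k) (hc : ∀ n, c n ≠ 0) (he : ∀ n, e n ≠ 0)
    (X X' : ℕ → LaurentSeries k)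
    (hX : ∀ n, Lev ((p:ℤ)^n) (X n)) (hX' : ∀ n, Lev ((p:ℤ)^n) (X' n)) :
    ∃ z z' v w : ℕ → LaurentSeries k,
      (∀ n, (z n).support.Finite) ∧ (∀ n, Lev ((p:ℤ)^n) (z n)) ∧
      (∀ n m, (z' n).coeff m = (z n).coeff (-m)) ∧
      (∀ n, Lev ((p:ℤ)^n) (v n)) ∧ (∀ n, Lev ((p:ℤ)^n) (w n)) ∧
      (∀ n, v n * HahnSeries.single (a n) (c n) - HahnSeries.single (b n) (e n) * v (n+1)
        = X n - z n) ∧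
      (∀ n, w n * HahnSeries.single (-(a n)) (c n) - HahnSeries.single (-(b n)) (e n) * w (n+1)
        = z' n + X' n) := by
  classical
  set T : ℕ → ℤ := fun n => ∑ j ∈ Finset.range n, (a j - b j) with hTdef
  have hTsucc : ∀ n, T (n+1) = T n + (a n - b n) := fun n => by
    simp only [hTdef, Finset.sum_range_succ]
  have hT : ∀ n, ((p:ℤ))^n ∣ T (n+1) - T n := by
    intro n
    rw [hTsucc]
    have heq : T n + (a n - b n) - T n = a n - b n := by ring
    rw [heq]
    exact dvd_sub (ha n) (hb n)
  set κ : ℕ → k := fun n => ∏ j ∈ Finset.range n, (c j / e j) with hκdef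
  have hκ : ∀ n, κ n ≠ 0 := by
    intro n
    exact Finset.prod_ne_zero_iff.mpr (fun j _ => div_ne_zero (hc j) (he j))
  have hκsucc : ∀ n, κ (n+1) = κ n * (c n / e n) := fun n => by
    simp only [hκdef, Finset.prod_range_succ]
  have hκc : ∀ n, κ n * c n ≠ 0 := fun n => mul_ne_zero (hκ n) (hc n)
  set Xh : ℕ → LaurentSeries k := fun n =>
    HahnSeries.single (-(T n + a n)) ((κ n * c n)⁻¹) * X n with hXhdef
  set Xh' : ℕ → LaurentSeries k := fun n =>
    HahnSeries.single (T n + a n) ((κ n * c n)⁻¹) * X' n with hXh'def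
  have hXhc : ∀ n q, (Xh n).coeff q = (κ n * c n)⁻¹ * (X n).coeff (q + (T n + a n)) := by
    intro n q
    rw [hXhdef]
    show (HahnSeries.single (-(T n + a n)) ((κ n * c n)⁻¹) * X n).coeff q = _
    rw [single_mul_coeff]
    congr 1
    ring
  have hXh'c : ∀ n q, (Xh' n).coeff q = (κ n * c n)⁻¹ * (X' n).coeff (q - (T n + a n)) := by
    intro n q
    rw [hXh'def]
    show (HahnSeries.single (T n + a n) ((κ n * c n)⁻¹) * X' n).coeff q = _
    rw [single_mul_coeff]
  have hXhlev : ∀ n q, (Xh n).coeff q ≠ 0 → ((p:ℤ))^n ∣ q + T n := by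
    intro n q hq
    rw [hXhc] at hq
    have h1 : (X n).coeff (q + (T n + a n)) ≠ 0 := by
      intro h0; rw [h0, mul_zero] at hq; exact hq rfl
    have h2 := hX n _ h1
    have h3 := dvd_sub h2 (ha n)
    have heq : q + (T n + a n) - a n = q + T n := by ring
    rwa [heq] at h3
  have hXh'lev : ∀ n q, (Xh' n).coeff q ≠ 0 → ((p:ℤ))^n ∣ q - T n := by
    intro n q hq
    rw [hXh'c] at hq
    have h1 : (X' n).coeff (q - (T n + a n)) ≠ 0 := by
      intro h0; rw [h0, mul_zero] at hq; exact hq rfl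
    have h2 := hX' n _ h1
    have h3 := dvd_add h2 (ha n)
    have heq : q - (T n + a n) + a n = q - T n := by ring
    rwa [heq] at h3
  set L : Set ℤ := {q | ∀ m, ((p:ℤ))^m ∣ q + T m} with hL
  set zf : ℕ → ℤ → k := fun n q =>
    if q < 0 ∧ q ∉ L then (Xh n).coeff q
    else if 0 < q ∧ q ∉ L then -((Xh' n).coeff (-q)) else 0 with hzf
  have hzffin : ∀ n, (Function.support (zf n)).Finite := by
    intro n
    have hsub : Function.support (zf n) ⊆
        {m : ℤ | (Xh n).coeff m ≠ 0 ∧ m < 0} ∪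
        (fun m : ℤ => -m) ⁻¹' {m : ℤ | (Xh' n).coeff m ≠ 0 ∧ m < 0} := by
      intro q hq
      rw [Function.mem_support] at hq
      simp only [hzf] at hq
      by_cases h1 : q < 0 ∧ q ∉ L
      · left
        rw [if_pos h1] at hq
        exact ⟨hq, h1.1⟩
      · rw [if_neg h1] at hq
        by_cases h2 : 0 < q ∧ q ∉ L
        · right
          rw [if_pos h2] at hq
          have hlt : -q < 0 := by omega
          exact ⟨by simpa using hq, hlt⟩
        · rw [if_neg h2] at hq; exact absurd rfl hq
    exact Set.Finite.subset (Set.Finite.union (finite_low_support (Xh n) 0)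
      (Set.Finite.preimage (Set.injOn_of_injective neg_injective)
        (finite_low_support (Xh' n) 0))) hsub
  set zh : ℕ → LaurentSeries k := fun n => ⟨zf n, (hzffin n).isPWO⟩ with hzh
  set ρh : ℕ → LaurentSeries k := fun n =>
    ⟨fun q => zf n (-q), by
      have hsub : (Function.support fun q : ℤ => zf n (-q)) ⊆
          (fun q : ℤ => -q) ⁻¹' Function.support (zf n) := fun q hq => hq
      exact (((hzffin n).preimage (Set.injOn_of_injective neg_injective)).subset hsub).isPWO⟩
    with hρh
  have hzhlev : ∀ n q, zf n q ≠ 0 → ((p:ℤ))^n ∣ q + T n := by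
    intro n q hq
    simp only [hzf] at hq
    by_cases h1 : q < 0 ∧ q ∉ L
    · rw [if_pos h1] at hq
      exact hXhlev n q hq
    · rw [if_neg h1] at hq
      by_cases h2 : 0 < q ∧ q ∉ L
      · rw [if_pos h2] at hq
        have h3 : (Xh' n).coeff (-q) ≠ 0 := by simpa using hq
        have h4 := dvd_neg.mpr (hXh'lev n (-q) h3)
        have heq : -(-q - T n) = q + T n := by ring
        rwa [heq] at h4
      · rw [if_neg h2] at hq; exact absurd rfl hq
  set Y : ℕ → LaurentSeries k := fun n => Xh n - zh n with hYdef
  set Y' : ℕ → LaurentSeries k := fun n => ρh n + Xh' n with hY'def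
  have hYc : ∀ n q, (Y n).coeff q = (Xh n).coeff q - zf n q := fun n q => by
    simp only [hYdef]
    rw [HahnSeries.coeff_sub]
  have hY'c : ∀ n q, (Y' n).coeff q = zf n (-q) + (Xh' n).coeff q := fun n q => by
    simp only [hY'def]
    rw [HahnSeries.coeff_add]
  have hYlev : ∀ n q, (Y n).coeff q ≠ 0 → ((p:ℤ))^n ∣ q + T n := by
    intro n q hq
    rw [hYc] at hq
    have : (Xh n).coeff q ≠ 0 ∨ zf n q ≠ 0 := by
      by_contra hcon
      push_neg at hcon
      rw [hcon.1, hcon.2, sub_zero] at hq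
      exact hq rfl
    rcases this with h | h
    · exact hXhlev n q h
    · exact hzhlev n q h
  have hnegY : ∀ n q, q < 0 → (¬ ∀ m, ((p:ℤ))^m ∣ q + T m) → (Y n).coeff q = 0 := by
    intro n q hq0 hqL
    rw [hYc]
    simp only [hzf]
    rw [if_pos ⟨hq0, hqL⟩, sub_self]
  have hT' : ∀ n, ((p:ℤ))^n ∣ (-T (n+1)) - (-T n) := by
    intro n
    have := dvd_neg.mpr (hT n)
    have heq : -(T (n+1) - T n) = -T (n+1) - -T n := by ring
    rwa [heq] at this
  have hmemL : ∀ q : ℤ, (∀ m, ((p:ℤ))^m ∣ q + -T m) ↔ (∀ m, ((p:ℤ))^m ∣ (-q) + T m) := by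
    intro q
    constructor
    · intro h m
      have := dvd_neg.mpr (h m)
      have heq : -(q + -T m) = -q + T m := by ring
      rwa [heq] at this
    · intro h m
      have := dvd_neg.mpr (h m)
      have heq : -(-q + T m) = q + -T m := by ring
      rwa [heq] at this
  have hY'lev : ∀ n q, (Y' n).coeff q ≠ 0 → ((p:ℤ))^n ∣ q + (-T n) := by
    intro n q hq
    rw [hY'c] at hq
    have : zf n (-q) ≠ 0 ∨ (Xh' n).coeff q ≠ 0 := by
      by_contra hcon
      push_neg at hcon
      rw [hcon.1, hcon.2, add_zero] at hq
      exact hq rfl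
    rcases this with h | h
    · have h4 := dvd_neg.mpr (hzhlev n (-q) h)
      have heq : -(-q + T n) = q + -T n := by ring
      rwa [heq] at h4
    · have h4 := hXh'lev n q h
      have heq : q - T n = q + -T n := by ring
      rwa [heq] at h4
  have hnegY' : ∀ n q, q < 0 → (¬ ∀ m, ((p:ℤ))^m ∣ q + -T m) → (Y' n).coeff q = 0 := by
    intro n q hq0 hqL
    have hnqL : (-q) ∉ L := by
      rw [hL]
      intro hmem
      exact hqL ((hmemL q).mpr hmem)
    have h1 : ¬((-q : ℤ) < 0 ∧ -q ∉ L) := by intro h; omega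
    have h2 : (0 < (-q : ℤ) ∧ -q ∉ L) := ⟨by omega, hnqL⟩
    rw [hY'c]
    simp only [hzf]
    rw [if_neg h1, if_pos h2, neg_neg]
    ring
  obtain ⟨W, hWeq, hWlev⟩ := core2norm p hp T hT Y hYlev hnegY
  obtain ⟨W', hW'eq, hW'lev⟩ := core2norm p hp (fun n => -T n) hT' Y' hY'lev hnegY'
  have hcz : ∀ n q, (zh n).coeff q = zf n q := fun _ _ => rfl
  have hcρ : ∀ n q, (ρh n).coeff q = zf n (-q) := fun _ _ => rfl
  have hsubinj : Function.Injective (fun m : ℤ => m - (T 0 + a 0)) := fun x y hxy => by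
    simpa using hxy
  refine ⟨fun n => HahnSeries.single (T n + a n) (κ n * c n) * zh n,
          fun n => HahnSeries.single (-(T n + a n)) (κ n * c n) * ρh n,
          fun n => HahnSeries.single (T n) (κ n) * W n,
          fun n => HahnSeries.single (-(T n)) (κ n) * W' n,
          ?_, ?_, ?_, ?_, ?_, ?_, ?_⟩
  · -- finite support of z
    intro n
    have hsub : (HahnSeries.single (T n + a n) (κ n * c n) * zh n).support ⊆
        (fun m : ℤ => m - (T n + a n)) ⁻¹' Function.support (zf n) := by
      intro m hm
      rw [HahnSeries.mem_support, single_mul_coeff, hcz] at hm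
      show zf n (m - (T n + a n)) ≠ 0
      intro h0
      rw [h0, mul_zero] at hm
      exact hm rfl
    have hinj : Function.Injective (fun m : ℤ => m - (T n + a n)) := fun x y hxy => by
      have : x - (T n + a n) = y - (T n + a n) := hxy
      omega
    exact (((hzffin n).preimage (Set.injOn_of_injective hinj)).subset hsub)
  · -- Lev z
    intro n m hm
    rw [single_mul_coeff, hcz] at hm
    have h1 : zf n (m - (T n + a n)) ≠ 0 := by
      intro h0
      rw [h0, mul_zero] at hm
      exact hm rfl
    have h2 := hzhlev n _ h1
    have heq : m - (T n + a n) + T n = m - a n := by ring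
    rw [heq] at h2
    have h3 := dvd_add h2 (ha n)
    have heq2 : m - a n + a n = m := by ring
    rwa [heq2] at h3
  · -- mirror relation
    intro n m
    rw [single_mul_coeff, single_mul_coeff, hcρ, hcz]
    have heq : -(m - -(T n + a n)) = -m - (T n + a n) := by ring
    rw [heq]
  · -- Lev v
    intro n m hm
    rw [single_mul_coeff] at hm
    have h1 : (W n).coeff (m - T n) ≠ 0 := by
      intro h0
      rw [h0, mul_zero] at hm
      exact hm rfl
    have h2 := hWlev n _ h1
    have heq : m - T n + T n = m := by ring
    rwa [heq] at h2
  · -- Lev w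
    intro n m hm
    rw [single_mul_coeff] at hm
    have h1 : (W' n).coeff (m - -(T n)) ≠ 0 := by
      intro h0
      rw [h0, mul_zero] at hm
      exact hm rfl
    have h2 := hW'lev n _ h1
    have heq : m - -T n + -T n = m := by ring
    rwa [heq] at h2
  · -- t-side equation
    intro n
    have hC : e n * κ (n+1) = κ n * c n := by
      rw [hκsucc]
      have hre : e n * (κ n * (c n / e n)) = κ n * (c n / e n * e n) := by ring
      rw [hre, div_mul_cancel₀ (c n) (he n)]
    have e1 : (HahnSeries.single (T n) (κ n) * W n) * HahnSeries.single (a n) (c n)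
        = HahnSeries.single (T n + a n) (κ n * c n) * W n := by
      rw [mul_right_comm, HahnSeries.single_mul_single]
    have hE : b n + T (n+1) = T n + a n := by rw [hTsucc]; ring
    have e2 : HahnSeries.single (b n) (e n) *
          (HahnSeries.single (T (n+1)) (κ (n+1)) * W (n+1))
        = HahnSeries.single (T n + a n) (κ n * c n) * W (n+1) := by
      rw [← mul_assoc, HahnSeries.single_mul_single, hE, hC]
    rw [e1, e2, ← mul_sub, hWeq]
    show HahnSeries.single (T n + a n) (κ n * c n) * (Xh n - zh n)
        = X n - HahnSeries.single (T n + a n) (κ n * c n) * zh n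
    rw [mul_sub]
    congr 1
    show HahnSeries.single (T n + a n) (κ n * c n) *
        (HahnSeries.single (-(T n + a n)) ((κ n * c n)⁻¹) * X n) = X n
    rw [← mul_assoc, HahnSeries.single_mul_single, add_neg_cancel,
      mul_inv_cancel₀ (hκc n), HahnSeries.single_zero_one, one_mul]
  · -- s-side equation
    intro n
    have hC : e n * κ (n+1) = κ n * c n := by
      rw [hκsucc]
      have hre : e n * (κ n * (c n / e n)) = κ n * (c n / e n * e n) := by ring
      rw [hre, div_mul_cancel₀ (c n) (he n)]
    have hE2 : -(T n) + -(a n) = -(T n + a n) := by ring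
    have e1 : (HahnSeries.single (-(T n)) (κ n) * W' n) * HahnSeries.single (-(a n)) (c n)
        = HahnSeries.single (-(T n + a n)) (κ n * c n) * W' n := by
      rw [mul_right_comm, HahnSeries.single_mul_single, hE2]
    have hE3 : -(b n) + -(T (n+1)) = -(T n + a n) := by rw [hTsucc]; ring
    have e2 : HahnSeries.single (-(b n)) (e n) *
          (HahnSeries.single (-(T (n+1))) (κ (n+1)) * W' (n+1))
        = HahnSeries.single (-(T n + a n)) (κ n * c n) * W' (n+1) := by
      rw [← mul_assoc, HahnSeries.single_mul_single, hE3, hC]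
    rw [e1, e2, ← mul_sub, hW'eq]
    show HahnSeries.single (-(T n + a n)) (κ n * c n) * (ρh n + Xh' n)
        = HahnSeries.single (-(T n + a n)) (κ n * c n) * ρh n + X' n
    rw [mul_add]
    congr 1
    show HahnSeries.single (-(T n + a n)) (κ n * c n) *
        (HahnSeries.single (T n + a n) ((κ n * c n)⁻¹) * X' n) = X' n
    rw [← mul_assoc, HahnSeries.single_mul_single, neg_add_cancel,
      mul_inv_cancel₀ (hκc n), HahnSeries.single_zero_one, one_mul]
lemma core1 (p : ℕ) (hp : 1 < p) (α : ℕ → LaurentSeries k) (hα : ∀ n, α n ≠ 0)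
    (hlev : ∀ n, Lev ((p:ℤ)^n) (α n)) :
    ∃ (γ : ℕ → LaurentSeries k) (b : ℕ → ℤ) (c : ℕ → k),
      (∀ n, γ n ≠ 0) ∧ (∀ n, Lev ((p:ℤ)^n) (γ n)) ∧ (∀ n, c n ≠ 0) ∧
      (∀ n, ((p:ℤ))^n ∣ b n) ∧
      (∀ n, α n * γ (n+1) = γ n * HahnSeries.single (b n) (c n)) := by
  classical
  set b : ℕ → ℤ := fun n => (α n).order with hbdef
  set c : ℕ → k := fun n => (α n).coeff (b n) with hcdef
  have hcne : ∀ n, c n ≠ 0 := fun n => HahnSeries.coeff_order_eq_zero.not.mpr (hα n)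
  have hbd : ∀ n, ((p:ℤ))^n ∣ b n := fun n => hlev n _ (hcne n)
  set u : ℕ → LaurentSeries k := fun n => α n * HahnSeries.single (-(b n)) ((c n)⁻¹) with hu
  have huc : ∀ n q, (u n).coeff q = (α n).coeff (q + b n) * (c n)⁻¹ := by
    intro n q
    simp only [hu]
    rw [mul_single_coeff]
    congr 2
    ring
  have hu0 : ∀ n, (u n).coeff 0 = 1 := by
    intro n
    rw [huc]
    simp only [zero_add]
    exact mul_inv_cancel₀ (hcne n)
  have hune : ∀ n, u n ≠ 0 := by
    intro n h0
    have := hu0 n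
    rw [h0] at this
    simp at this
  have husupp : ∀ n q, (u n).coeff q ≠ 0 → 0 ≤ q ∧ ((p:ℤ))^n ∣ q := by
    intro n q hq
    rw [huc] at hq
    have h1 : (α n).coeff (q + b n) ≠ 0 := fun h0 => hq (by rw [h0, zero_mul])
    constructor
    · have h2 : b n ≤ q + b n := HahnSeries.order_le_of_coeff_ne_zero h1
      omega
    · have h2 := hlev n _ h1
      have h3 := dvd_sub h2 (hbd n)
      have heq : q + b n - b n = q := by ring
      rwa [heq] at h3
  have hone : ∀ q : ℤ, (1 : LaurentSeries k).coeff q ≠ 0 → q = 0 := by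
    intro q hq
    by_contra h
    rw [HahnSeries.coeff_one, if_neg h] at hq
    exact hq rfl
  -- order-zero lemma
  have hord0 : ∀ x : LaurentSeries k, (∀ q, x.coeff q ≠ 0 → 0 ≤ q) → x.coeff 0 = 1 →
      x.order = 0 := by
    intro x hsupp h0
    have hne : x ≠ 0 := by
      intro h
      rw [h] at h0
      simp at h0
    have h1 : x.order ≤ 0 := HahnSeries.order_le_of_coeff_ne_zero (by rw [h0]; exact one_ne_zero)
    have h2 : 0 ≤ x.order := hsupp _ (HahnSeries.coeff_order_eq_zero.not.mpr hne)
    omega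
  have hmul0 : ∀ x y : LaurentSeries k, (∀ q, x.coeff q ≠ 0 → 0 ≤ q) →
      (∀ q, y.coeff q ≠ 0 → 0 ≤ q) → x.coeff 0 = 1 → y.coeff 0 = 1 → (x*y).coeff 0 = 1 := by
    intro x y hx hy hx0 hy0
    have h1 := HahnSeries.coeff_mul_order_add_order x y
    rw [hord0 x hx hx0, hord0 y hy hy0] at h1
    simp only [add_zero] at h1
    rw [h1, HahnSeries.leadingCoeff_eq, HahnSeries.leadingCoeff_eq,
      hord0 x hx hx0, hord0 y hy hy0, hx0, hy0, one_mul]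
  set F : ℕ → ℕ → LaurentSeries k := fun n N => ∏ m ∈ Finset.Ico n N, u m with hF
  have hFone : ∀ n N, N ≤ n → F n N = 1 := by
    intro n N h
    simp only [hF]
    rw [Finset.Ico_eq_empty (by omega), Finset.prod_empty]
  have hFstep : ∀ n N, n ≤ N → F n (N+1) = F n N * u N := by
    intro n N h
    simp only [hF]
    exact Finset.prod_Ico_succ_top h _
  have hFsupp : ∀ N n q, (F n N).coeff q ≠ 0 → 0 ≤ q ∧ ((p:ℤ))^n ∣ q := by
    intro N
    induction N with
    | zero =>
      intro n q hq
      rw [hFone n 0 (Nat.zero_le n)] at hq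
      have := hone q hq
      subst this
      exact ⟨le_refl 0, dvd_zero _⟩
    | succ N ih =>
      intro n q hq
      rcases Nat.lt_or_ge N n with h | h
      · rw [hFone n (N+1) (by omega)] at hq
        have := hone q hq
        subst this
        exact ⟨le_refl 0, dvd_zero _⟩
      · rw [hFstep n N h] at hq
        have hmem : q ∈ (F n N * u N).support := hq
        obtain ⟨x, hx, y, hy, rfl⟩ :=
          Set.mem_add.mp (HahnSeries.support_mul_subset hmem)
        rw [HahnSeries.mem_support] at hx hy
        have h1 := ih n x hx
        have h2 := husupp N y hy
        refine ⟨by omega, dvd_add h1.2 (dvd_trans (pow_dvd_pow _ h) h2.2)⟩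
  have hF0 : ∀ N n, (F n N).coeff 0 = 1 := by
    intro N
    induction N with
    | zero =>
      intro n
      rw [hFone n 0 (Nat.zero_le n), HahnSeries.coeff_one, if_pos rfl]
    | succ N ih =>
      intro n
      rcases Nat.lt_or_ge N n with h | h
      · rw [hFone n (N+1) (by omega), HahnSeries.coeff_one, if_pos rfl]
      · rw [hFstep n N h]
        exact hmul0 _ _ (fun q hq => (hFsupp N n q hq).1) (fun q hq => (husupp N q hq).1)
          (ih n) (hu0 N)
  -- stability of coefficients
  have hstab : ∀ n N₁ N₂ : ℕ, n ≤ N₁ → N₁ ≤ N₂ → ∀ q : ℤ, q < ((p:ℤ))^N₁ →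
      (F n N₂).coeff q = (F n N₁).coeff q := by
    intro n N₁ N₂ hn hN q hq
    induction N₂, hN using Nat.le_induction with
    | base => rfl
    | succ N₂ hN ih =>
      rw [hFstep n N₂ (by omega)]
      have hsplit : F n N₂ * u N₂ = F n N₂ + F n N₂ * (u N₂ - 1) := by ring
      rw [hsplit, HahnSeries.coeff_add]
      have hzero : (F n N₂ * (u N₂ - 1)).coeff q = 0 := by
        by_contra hc
        have hmem : q ∈ (F n N₂ * (u N₂ - 1)).support := hc
        obtain ⟨x, hx, y, hy, rfl⟩ :=
          Set.mem_add.mp (HahnSeries.support_mul_subset hmem)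
        rw [HahnSeries.mem_support] at hx hy
        have h1 := (hFsupp N₂ n x hx).1
        have hy0 : y ≠ 0 := by
          intro h0
          rw [h0, HahnSeries.coeff_sub, hu0, HahnSeries.coeff_one, if_pos rfl] at hy
          simp at hy
        have hyu : (u N₂).coeff y ≠ 0 := by
          rw [HahnSeries.coeff_sub, HahnSeries.coeff_one, if_neg hy0, sub_zero] at hy
          exact hy
        have h2 := husupp N₂ y hyu
        have h3 : ((p:ℤ))^N₂ ≤ y := Int.le_of_dvd (by omega) h2.2
        have h4 : ((p:ℤ))^N₁ ≤ ((p:ℤ))^N₂ := by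
          apply pow_le_pow_right₀ (by exact_mod_cast Nat.one_le_of_lt hp) hN
        omega
      rw [hzero, add_zero]
      exact ih
  set cut : ℕ → ℤ → ℕ := fun n q => max n (q.toNat + 1) with hcut
  have hqlt : ∀ n (q : ℤ), q < ((p:ℤ))^(cut n q) := by
    intro n q
    have h1 : (cut n q : ℕ) < p ^ (cut n q) := Nat.lt_pow_self hp
    have h2 : q.toNat < cut n q := by simp only [hcut]; omega
    have h3 : q ≤ (q.toNat : ℤ) := Int.self_le_toNat q
    have h4 : ((cut n q : ℕ) : ℤ) < ((p:ℤ))^(cut n q) := by exact_mod_cast h1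
    omega
  set γ : ℕ → LaurentSeries k := fun n =>
    ⟨fun q => (F n (cut n q)).coeff q, by
      apply bddBelow_isPWO
      refine ⟨0, fun q hq => ?_⟩
      exact (hFsupp _ n q hq).1⟩ with hγ
  have hγc : ∀ n (q : ℤ) N, cut n q ≤ N → (γ n).coeff q = (F n N).coeff q := by
    intro n q N hN
    show (F n (cut n q)).coeff q = (F n N).coeff q
    exact (hstab n (cut n q) N (le_max_left _ _) hN q (hqlt n q)).symm
  have hγsupp : ∀ n q, (γ n).coeff q ≠ 0 → 0 ≤ q ∧ ((p:ℤ))^n ∣ q := by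
    intro n q hq
    exact hFsupp (cut n q) n q hq
  have hγne : ∀ n, γ n ≠ 0 := by
    intro n h0
    have h1 : (γ n).coeff 0 = 1 := by
      show (F n (cut n 0)).coeff 0 = 1
      exact hF0 _ n
    rw [h0] at h1
    simp at h1
  have hrel : ∀ n, u n * γ (n+1) = γ n := by
    intro n
    ext q
    rcases lt_or_ge q 0 with hq | hq
    · have hL : (u n * γ (n+1)).coeff q = 0 := by
        by_contra hc
        have hmem : q ∈ (u n * γ (n+1)).support := hc
        obtain ⟨x, hx, y, hy, rfl⟩ :=
          Set.mem_add.mp (HahnSeries.support_mul_subset hmem)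
        rw [HahnSeries.mem_support] at hx hy
        have h1 := (husupp n x hx).1
        have h2 := (hγsupp (n+1) y hy).1
        omega
      have hR : (γ n).coeff q = 0 := by
        by_contra hc
        have := (hγsupp n q hc).1
        omega
      rw [hL, hR]
    · set N := max (n+1) (q.toNat + 1) with hN
      have hD : ∀ q' : ℤ, q' ≤ q → (γ (n+1) - F (n+1) N).coeff q' = 0 := by
        intro q' hq'
        rw [HahnSeries.coeff_sub]
        rcases lt_or_ge q' 0 with h | h
        · have h1 : (γ (n+1)).coeff q' = 0 := by
            by_contra hc
            have := (hγsupp (n+1) q' hc).1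
            omega
          have h2 : (F (n+1) N).coeff q' = 0 := by
            by_contra hc
            have := (hFsupp N (n+1) q' hc).1
            omega
          rw [h1, h2, sub_zero]
        · have hcutle : cut (n+1) q' ≤ N := by
            have := Int.toNat_le_toNat hq'
            simp only [hcut, hN]
            omega
          rw [hγc (n+1) q' N hcutle, sub_self]
      have hsplit : u n * γ (n+1) = u n * F (n+1) N + u n * (γ (n+1) - F (n+1) N) := by ring
      rw [hsplit, HahnSeries.coeff_add]
      have hzero : (u n * (γ (n+1) - F (n+1) N)).coeff q = 0 := by
        by_contra hc
        have hmem : q ∈ (u n * (γ (n+1) - F (n+1) N)).support := hc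
        obtain ⟨x, hx, y, hy, rfl⟩ :=
          Set.mem_add.mp (HahnSeries.support_mul_subset hmem)
        rw [HahnSeries.mem_support] at hx hy
        have h1 := (husupp n x hx).1
        exact hy (hD y (by omega))
      rw [hzero, add_zero]
      have hprod : u n * F (n+1) N = F n N := by
        simp only [hF]
        exact (Finset.prod_eq_prod_Ico_succ_bot
          (lt_of_lt_of_le (Nat.lt_succ_self n) (le_max_left _ _)) _).symm
      rw [hprod]
      exact (hγc n q N (by simp only [hcut, hN]; omega)).symm
  refine ⟨γ, b, c, hγne, fun n q hq => (hγsupp n q hq).2, hcne, hbd, ?_⟩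
  intro n
  have h1 : α n = HahnSeries.single (b n) (c n) * u n := by
    simp only [hu]
    rw [mul_left_comm, HahnSeries.single_mul_single, add_neg_cancel,
      mul_inv_cancel₀ (hcne n), HahnSeries.single_zero_one, mul_one]
  rw [h1, mul_assoc, hrel n]
  exact mul_comm _ _

lemma lev_inv {P : ℤ} (hP : 0 < P) {x : LaurentSeries k} (hx : Lev P x) : Lev P x⁻¹ := by
  rcases eq_or_ne x 0 with rfl | hx0
  · rw [inv_zero]
    intro m hm
    simp at hm
  classical
  set F : ℤ →+ ℤ := AddMonoidHom.mk' (fun q => q * P) (fun a b => add_mul a b P) with hF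
  have hFi : Function.Injective F := by
    intro a1 b1 hab
    have : a1 * P = b1 * P := hab
    exact mul_right_cancel₀ (by omega) this
  have hFo : ∀ g g' : ℤ, F g ≤ F g' ↔ g ≤ g' := by
    intro g g'
    show g * P ≤ g' * P ↔ g ≤ g'
    exact mul_le_mul_iff_of_pos_right hP
  have hbdd : BddBelow (Function.support (fun q : ℤ => x.coeff (q * P))) := by
    refine ⟨-(x.order.natAbs), fun q hq => ?_⟩
    have h1 : x.order ≤ q * P := HahnSeries.order_le_of_coeff_ne_zero hq
    have h2 : -((x.order.natAbs : ℤ)) ≤ x.order := by omega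
    by_contra hcon
    push_neg at hcon
    have hq0 : q < 0 := by omega
    have h3 : q * P ≤ q * 1 := mul_le_mul_of_nonpos_left (by omega) (by omega)
    simp only [mul_one] at h3
    omega
  set x₀ : LaurentSeries k := ⟨fun q => x.coeff (q * P), bddBelow_isPWO _ hbdd⟩ with hx₀
  set E := HahnSeries.embDomainRingHom (R := k) F hFi hFo with hE
  have hrange : ∀ m : ℤ, P ∣ m ↔ m ∈ Set.range (fun q : ℤ => q * P) := by
    intro m
    constructor
    · rintro ⟨c2, rfl⟩
      exact ⟨c2, by ring⟩
    · rintro ⟨c2, rfl⟩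
      exact ⟨c2, by ring⟩
  have hembx : E x₀ = x := by
    ext m
    by_cases hm : P ∣ m
    · obtain ⟨q, rfl⟩ := (hrange m).mp hm
      have h1 : (E x₀).coeff (F q) = x₀.coeff q := HahnSeries.embDomain_coeff
      exact h1
    · have h1 : (E x₀).coeff m = 0 := by
        apply HahnSeries.embDomain_notin_range
        intro hcon
        apply hm
        obtain ⟨q, hq⟩ := hcon
        exact (hrange m).mpr ⟨q, hq⟩
      have h2 : x.coeff m = 0 := by
        by_contra hc
        exact hm (hx m hc)
      rw [h1, h2]
  have hx₀ne : x₀ ≠ 0 := by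
    intro h0
    apply hx0
    rw [← hembx, h0, map_zero]
  have hinv : x⁻¹ = E (x₀⁻¹) := by
    apply inv_eq_of_mul_eq_one_right
    rw [← hembx, ← map_mul, mul_inv_cancel₀ hx₀ne, map_one]
  rw [hinv]
  intro m hm
  by_contra hndvd
  apply hm
  apply HahnSeries.embDomain_notin_range
  intro hcon
  apply hndvd
  obtain ⟨q, hq⟩ := hcon
  exact (hrange m).mpr ⟨q, hq⟩

/-- data attached to a strictly-upper-triangular position -/
structure SD (k : Type*) [Field k] where
  z : ℕ → LaurentSeries k
  z' : ℕ → LaurentSeries k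
  v : ℕ → LaurentSeries k
  w : ℕ → LaurentSeries k

instance : Inhabited (SD k) := ⟨⟨fun _ => 0, fun _ => 0, fun _ => 0, fun _ => 0⟩⟩

section Assembly

variable (p r : ℕ) (M : ℕ → Matrix (Fin r) (Fin r) (LaurentSeries k))
variable (γm : ℕ → Fin r → LaurentSeries k) (bD : ℕ → Fin r → ℤ) (cD : ℕ → Fin r → k)

/-- candidate `g`-matrix entries -/
noncomputable def gg (f : Fin r → Fin r → SD k) (n : ℕ) (i j : Fin r) : LaurentSeries k :=
  if i = j then γm n i else if i < j then γm n i * (f i j).v n else 0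

/-- candidate `A`-matrix entries -/
noncomputable def AA (f : Fin r → Fin r → SD k) (n : ℕ) (i j : Fin r) : LaurentSeries k :=
  if i = j then HahnSeries.single (bD n i) (cD n i) else if i < j then (f i j).z n else 0

/-- candidate `A'`-matrix entries (coefficientwise reversal of `A`) -/
noncomputable def AAr (f : Fin r → Fin r → SD k) (n : ℕ) (i j : Fin r) : LaurentSeries k :=
  if i = j then HahnSeries.single (-(bD n i)) (cD n i) else if i < j then (f i j).z' n else 0

/-- candidate `h`-matrix entries -/
noncomputable def hh (f : Fin r → Fin r → SD k) (n : ℕ) (i j : Fin r) : LaurentSeries k :=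
  if i = j then 1 else if i < j then (f i j).w n else 0

/-- the `t`-side known series for position `(i,j)` -/
noncomputable def XX (f : Fin r → Fin r → SD k) (i j : Fin r) (n : ℕ) : LaurentSeries k :=
  (γm n i)⁻¹ *
    ((∑ k2 : Fin r, if i < k2 then M n i k2 * gg r γm f (n+1) k2 j else 0)
      - (∑ l : Fin r, if i < l ∧ l < j then gg r γm f n i l * AA r bD cD f n l j else 0))

/-- the `s`-side known series for position `(i,j)` -/
noncomputable def XX' (f : Fin r → Fin r → SD k) (i j : Fin r) (n : ℕ) : LaurentSeries k :=
  ∑ k2 : Fin r, if i < k2 ∧ k2 < j then AAr r bD cD f n i k2 * hh r f (n+1) k2 j else 0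

/-- the conclusion of `core2`, packaged -/
def SDProp (aE bE : ℕ → ℤ) (cE eE : ℕ → k) (X X' : ℕ → LaurentSeries k) (s : SD k) : Prop :=
  (∀ n, (s.z n).support.Finite) ∧ (∀ n, Lev ((p:ℤ)^n) (s.z n)) ∧
  (∀ n m, (s.z' n).coeff m = (s.z n).coeff (-m)) ∧
  (∀ n, Lev ((p:ℤ)^n) (s.v n)) ∧ (∀ n, Lev ((p:ℤ)^n) (s.w n)) ∧
  (∀ n, s.v n * HahnSeries.single (aE n) (cE n) - HahnSeries.single (bE n) (eE n) * s.v (n+1)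
    = X n - s.z n) ∧
  (∀ n, s.w n * HahnSeries.single (-(aE n)) (cE n)
      - HahnSeries.single (-(bE n)) (eE n) * s.w (n+1) = s.z' n + X' n)

def PairProp (f : Fin r → Fin r → SD k) (i j : Fin r) : Prop :=
  SDProp p (fun n => bD n j) (fun n => bD n i) (fun n => cD n j) (fun n => cD n i)
    (XX r M γm bD cD f i j) (XX' r bD cD f i j) (f i j)

lemma gg_congr (f f' : Fin r → Fin r → SD k) (n : ℕ) (a b2 : Fin r)
    (hab : a < b2 → f a b2 = f' a b2) : gg r γm f n a b2 = gg r γm f' n a b2 := by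
  unfold gg
  by_cases h1 : a = b2
  · rw [if_pos h1, if_pos h1]
  · rw [if_neg h1, if_neg h1]
    by_cases h2 : a < b2
    · rw [if_pos h2, if_pos h2, hab h2]
    · rw [if_neg h2, if_neg h2]

lemma AA_congr (f f' : Fin r → Fin r → SD k) (n : ℕ) (a b2 : Fin r)
    (hab : a < b2 → f a b2 = f' a b2) : AA r bD cD f n a b2 = AA r bD cD f' n a b2 := by
  unfold AA
  by_cases h1 : a = b2
  · rw [if_pos h1, if_pos h1]
  · rw [if_neg h1, if_neg h1]
    by_cases h2 : a < b2
    · rw [if_pos h2, if_pos h2, hab h2]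
    · rw [if_neg h2, if_neg h2]

lemma AAr_congr (f f' : Fin r → Fin r → SD k) (n : ℕ) (a b2 : Fin r)
    (hab : a < b2 → f a b2 = f' a b2) : AAr r bD cD f n a b2 = AAr r bD cD f' n a b2 := by
  unfold AAr
  by_cases h1 : a = b2
  · rw [if_pos h1, if_pos h1]
  · rw [if_neg h1, if_neg h1]
    by_cases h2 : a < b2
    · rw [if_pos h2, if_pos h2, hab h2]
    · rw [if_neg h2, if_neg h2]

lemma hh_congr (f f' : Fin r → Fin r → SD k) (n : ℕ) (a b2 : Fin r)
    (hab : a < b2 → f a b2 = f' a b2) : hh r f n a b2 = hh r f' n a b2 := by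
  unfold hh
  by_cases h1 : a = b2
  · rw [if_pos h1, if_pos h1]
  · rw [if_neg h1, if_neg h1]
    by_cases h2 : a < b2
    · rw [if_pos h2, if_pos h2, hab h2]
    · rw [if_neg h2, if_neg h2]

lemma XX_congr (f f' : Fin r → Fin r → SD k) (i j : Fin r) (hij : i < j)
    (hag : ∀ a b2 : Fin r, a < b2 → (b2:ℕ) - (a:ℕ) < (j:ℕ) - (i:ℕ) → f a b2 = f' a b2) :
    XX r M γm bD cD f i j = XX r M γm bD cD f' i j := by
  funext n
  unfold XX
  congr 1
  congr 1
  · apply Finset.sum_congr rfl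
    intro k2 _
    by_cases h1 : i < k2
    · rw [if_pos h1, if_pos h1]
      congr 1
      apply gg_congr
      intro h2
      apply hag _ _ h2
      have := h1
      rw [Fin.lt_def] at h1 h2
      omega
    · rw [if_neg h1, if_neg h1]
  · apply Finset.sum_congr rfl
    intro l _
    by_cases h1 : i < l ∧ l < j
    · rw [if_pos h1, if_pos h1]
      have hil := h1.1
      have hlj := h1.2
      rw [Fin.lt_def] at hil hlj
      congr 1
      · apply gg_congr
        intro h2
        apply hag _ _ h2
        omega
      · apply AA_congr
        intro h2
        rw [Fin.lt_def] at h2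
        apply hag _ _ (by rw [Fin.lt_def]; omega)
        omega
    · rw [if_neg h1, if_neg h1]

lemma XX'_congr (f f' : Fin r → Fin r → SD k) (i j : Fin r) (hij : i < j)
    (hag : ∀ a b2 : Fin r, a < b2 → (b2:ℕ) - (a:ℕ) < (j:ℕ) - (i:ℕ) → f a b2 = f' a b2) :
    XX' r bD cD f i j = XX' r bD cD f' i j := by
  funext n
  unfold XX'
  apply Finset.sum_congr rfl
  intro k2 _
  by_cases h1 : i < k2 ∧ k2 < j
  · rw [if_pos h1, if_pos h1]
    have hik := h1.1
    have hkj := h1.2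
    rw [Fin.lt_def] at hik hkj
    congr 1
    · apply AAr_congr
      intro h2
      rw [Fin.lt_def] at h2
      apply hag _ _ (by rw [Fin.lt_def]; omega)
      omega
    · apply hh_congr
      intro h2
      rw [Fin.lt_def] at h2
      apply hag _ _ (by rw [Fin.lt_def]; omega)
      omega
  · rw [if_neg h1, if_neg h1]

lemma gg_lev (hγlev : ∀ n i2, Lev ((p:ℤ)^n) (γm n i2)) (f : Fin r → Fin r → SD k)
    (hfv : ∀ a b2 : Fin r, a < b2 → ∀ n, Lev ((p:ℤ)^n) ((f a b2).v n)) (n : ℕ) (a b2 : Fin r) :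
    Lev ((p:ℤ)^n) (gg r γm f n a b2) := by
  unfold gg
  by_cases h1 : a = b2
  · rw [if_pos h1]; exact hγlev n a
  · rw [if_neg h1]
    by_cases h2 : a < b2
    · rw [if_pos h2]; exact (hγlev n a).mul (hfv a b2 h2 n)
    · rw [if_neg h2]; exact Lev.zero _

lemma AA_lev (hbd : ∀ n i2, ((p:ℤ))^n ∣ bD n i2) (f : Fin r → Fin r → SD k)
    (hfz : ∀ a b2 : Fin r, a < b2 → ∀ n, Lev ((p:ℤ)^n) ((f a b2).z n)) (n : ℕ) (a b2 : Fin r) :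
    Lev ((p:ℤ)^n) (AA r bD cD f n a b2) := by
  unfold AA
  by_cases h1 : a = b2
  · rw [if_pos h1]; exact Lev.single (hbd n a) _
  · rw [if_neg h1]
    by_cases h2 : a < b2
    · rw [if_pos h2]; exact hfz a b2 h2 n
    · rw [if_neg h2]; exact Lev.zero _

lemma AAr_lev (hbd : ∀ n i2, ((p:ℤ))^n ∣ bD n i2) (f : Fin r → Fin r → SD k)
    (hfz : ∀ a b2 : Fin r, a < b2 → ∀ n, Lev ((p:ℤ)^n) ((f a b2).z n))
    (hfz' : ∀ a b2 : Fin r, a < b2 → ∀ n m, ((f a b2).z' n).coeff m = ((f a b2).z n).coeff (-m))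
    (n : ℕ) (a b2 : Fin r) :
    Lev ((p:ℤ)^n) (AAr r bD cD f n a b2) := by
  unfold AAr
  by_cases h1 : a = b2
  · rw [if_pos h1]
    exact Lev.single (dvd_neg.mpr (hbd n a)) _
  · rw [if_neg h1]
    by_cases h2 : a < b2
    · rw [if_pos h2]
      intro m hm
      rw [hfz' a b2 h2 n m] at hm
      have h3 := hfz a b2 h2 n (-m) hm
      exact dvd_neg.mp h3
    · rw [if_neg h2]; exact Lev.zero _

lemma hh_lev (f : Fin r → Fin r → SD k)
    (hfw : ∀ a b2 : Fin r, a < b2 → ∀ n, Lev ((p:ℤ)^n) ((f a b2).w n)) (n : ℕ) (a b2 : Fin r) :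
    Lev ((p:ℤ)^n) (hh r f n a b2) := by
  unfold hh
  by_cases h1 : a = b2
  · rw [if_pos h1]; exact Lev.one _
  · rw [if_neg h1]
    by_cases h2 : a < b2
    · rw [if_pos h2]; exact hfw a b2 h2 n
    · rw [if_neg h2]; exact Lev.zero _


/-- invariant: all strictly-upper data satisfies the level and mirror conditions -/
def FAll (f : Fin r → Fin r → SD k) : Prop :=
  ∀ a b2 : Fin r, a < b2 →
    (∀ n, Lev ((p:ℤ)^n) ((f a b2).v n)) ∧ (∀ n, Lev ((p:ℤ)^n) ((f a b2).w n)) ∧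
    (∀ n, Lev ((p:ℤ)^n) ((f a b2).z n)) ∧
    (∀ n m, ((f a b2).z' n).coeff m = ((f a b2).z n).coeff (-m))

lemma XX_lev (hp : 1 < p)
    (hγlev : ∀ n i2, Lev ((p:ℤ)^n) (γm n i2))
    (hbd : ∀ n i2, ((p:ℤ))^n ∣ bD n i2)
    (hMlev : ∀ n (i2 j2 : Fin r), Lev ((p:ℤ)^n) (M n i2 j2))
    (f : Fin r → Fin r → SD k) (hfall : FAll p r f)
    (i j : Fin r) (n : ℕ) : Lev ((p:ℤ)^n) (XX r M γm bD cD f i j n) := by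
  have hp0 : (0:ℤ) < (p:ℤ)^n := pow_pos (by exact_mod_cast Nat.zero_lt_of_lt hp) n
  have hfv : ∀ a b2 : Fin r, a < b2 → ∀ n2, Lev ((p:ℤ)^n2) ((f a b2).v n2) :=
    fun a b2 h => (hfall a b2 h).1
  have hfz : ∀ a b2 : Fin r, a < b2 → ∀ n2, Lev ((p:ℤ)^n2) ((f a b2).z n2) :=
    fun a b2 h => (hfall a b2 h).2.2.1
  unfold XX
  apply Lev.mul
  · exact lev_inv hp0 (hγlev n i)
  apply Lev.sub
  · apply Lev.sum
    intro k2 _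
    by_cases h1 : i < k2
    · rw [if_pos h1]
      apply Lev.mul (hMlev n i k2)
      exact (gg_lev p r γm hγlev f hfv (n+1) k2 j).of_dvd (pow_dvd_pow _ (by omega))
    · rw [if_neg h1]; exact Lev.zero _
  · apply Lev.sum
    intro l _
    by_cases h1 : i < l ∧ l < j
    · rw [if_pos h1]
      exact (gg_lev p r γm hγlev f hfv n i l).mul (AA_lev p r bD cD hbd f hfz n l j)
    · rw [if_neg h1]; exact Lev.zero _

lemma XX'_lev (hp : 1 < p)
    (hbd : ∀ n i2, ((p:ℤ))^n ∣ bD n i2)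
    (f : Fin r → Fin r → SD k) (hfall : FAll p r f)
    (i j : Fin r) (n : ℕ) : Lev ((p:ℤ)^n) (XX' r bD cD f i j n) := by
  have hfw : ∀ a b2 : Fin r, a < b2 → ∀ n2, Lev ((p:ℤ)^n2) ((f a b2).w n2) :=
    fun a b2 h => (hfall a b2 h).2.1
  have hfz : ∀ a b2 : Fin r, a < b2 → ∀ n2, Lev ((p:ℤ)^n2) ((f a b2).z n2) :=
    fun a b2 h => (hfall a b2 h).2.2.1
  have hfz' : ∀ a b2 : Fin r, a < b2 → ∀ n2 m, ((f a b2).z' n2).coeff m = ((f a b2).z n2).coeff (-m) :=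
    fun a b2 h => (hfall a b2 h).2.2.2
  unfold XX'
  apply Lev.sum
  intro k2 _
  by_cases h1 : i < k2 ∧ k2 < j
  · rw [if_pos h1]
    apply Lev.mul
    · exact AAr_lev p r bD cD hbd f hfz hfz' n i k2
    · exact (hh_lev p r f hfw (n+1) k2 j).of_dvd (pow_dvd_pow _ (by omega))
  · rw [if_neg h1]; exact Lev.zero _

lemma stepAll (hp : 1 < p)
    (hγlev : ∀ n i2, Lev ((p:ℤ)^n) (γm n i2))
    (hbd : ∀ n i2, ((p:ℤ))^n ∣ bD n i2) (hcd : ∀ n i2, cD n i2 ≠ 0)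
    (hMlev : ∀ n (i2 j2 : Fin r), Lev ((p:ℤ)^n) (M n i2 j2))
    (d : ℕ) (f : Fin r → Fin r → SD k)
    (hf : ∀ i j : Fin r, i < j → (j:ℕ) - (i:ℕ) < d → PairProp p r M γm bD cD f i j)
    (hfall : FAll p r f) :
    ∃ f' : Fin r → Fin r → SD k,
      (∀ i j : Fin r, i < j → (j:ℕ) - (i:ℕ) < d + 1 → PairProp p r M γm bD cD f' i j) ∧
      FAll p r f' := by
  classical
  have hex : ∀ i j : Fin r, ∃ s : SD k,
      (i < j ∧ (j:ℕ) - (i:ℕ) = d) →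
        SDProp p (fun n => bD n j) (fun n => bD n i) (fun n => cD n j) (fun n => cD n i)
          (XX r M γm bD cD f i j) (XX' r bD cD f i j) s := by
    intro i j
    by_cases hcond : i < j ∧ (j:ℕ) - (i:ℕ) = d
    · obtain ⟨z, z', v, w, h1, h2, h3, h4, h5, h6, h7⟩ :=
        core2 p hp (fun n => bD n j) (fun n => bD n i) (fun n => hbd n j) (fun n => hbd n i)
          (fun n => cD n j) (fun n => cD n i) (fun n => hcd n j) (fun n => hcd n i)
          (XX r M γm bD cD f i j) (XX' r bD cD f i j)
          (XX_lev p r M γm bD cD hp hγlev hbd hMlev f hfall i j)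
          (XX'_lev p r bD cD hp hbd f hfall i j)
      exact ⟨⟨z, z', v, w⟩, fun _ => ⟨h1, h2, h3, h4, h5, h6, h7⟩⟩
    · exact ⟨default, fun hc => absurd hc hcond⟩
  choose sc hs using hex
  set f' : Fin r → Fin r → SD k :=
    fun i j => if i < j ∧ (j:ℕ) - (i:ℕ) = d then sc i j else f i j with hf'def
  have hagree : ∀ a b2 : Fin r, a < b2 → (b2:ℕ) - (a:ℕ) ≠ d → f' a b2 = f a b2 := by
    intro a b2 _ hgap
    simp only [hf'def]
    rw [if_neg (by rintro ⟨_, h⟩; exact hgap h)]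
  have hfall' : FAll p r f' := by
    intro a b2 hab
    by_cases hcond : a < b2 ∧ (b2:ℕ) - (a:ℕ) = d
    · have he : f' a b2 = sc a b2 := by simp only [hf'def]; rw [if_pos hcond]
      obtain ⟨h1, h2, h3, h4, h5, h6, h7⟩ := hs a b2 hcond
      rw [he]
      exact ⟨h4, h5, h2, h3⟩
    · have he : f' a b2 = f a b2 := by simp only [hf'def]; rw [if_neg hcond]
      rw [he]
      exact hfall a b2 hab
  refine ⟨f', ?_, hfall'⟩
  intro i j hij hgap
  by_cases hgd : (j:ℕ) - (i:ℕ) = d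
  · have hXeq : XX r M γm bD cD f' i j = XX r M γm bD cD f i j := by
      apply XX_congr
      · exact hij
      · intro a b2 hab h2
        exact hagree a b2 hab (by omega)
    have hX'eq : XX' r bD cD f' i j = XX' r bD cD f i j := by
      apply XX'_congr
      · exact hij
      · intro a b2 hab h2
        exact hagree a b2 hab (by omega)
    have he : f' i j = sc i j := by simp only [hf'def]; rw [if_pos ⟨hij, hgd⟩]
    show SDProp p (fun n => bD n j) (fun n => bD n i) (fun n => cD n j) (fun n => cD n i)
      (XX r M γm bD cD f' i j) (XX' r bD cD f' i j) (f' i j)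
    rw [hXeq, hX'eq, he]
    exact hs i j ⟨hij, hgd⟩
  · have hXeq : XX r M γm bD cD f' i j = XX r M γm bD cD f i j := by
      apply XX_congr
      · exact hij
      · intro a b2 hab h2
        apply hagree a b2 hab
        have := hij
        rw [Fin.lt_def] at this
        omega
    have hX'eq : XX' r bD cD f' i j = XX' r bD cD f i j := by
      apply XX'_congr
      · exact hij
      · intro a b2 hab h2
        apply hagree a b2 hab
        have := hij
        rw [Fin.lt_def] at this
        omega
    have he : f' i j = f i j := hagree i j hij hgd
    show SDProp p (fun n => bD n j) (fun n => bD n i) (fun n => cD n j) (fun n => cD n i)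
      (XX r M γm bD cD f' i j) (XX' r bD cD f' i j) (f' i j)
    rw [hXeq, hX'eq, he]
    exact hf i j hij (by omega)

lemma buildAll (hp : 1 < p)
    (hγlev : ∀ n i2, Lev ((p:ℤ)^n) (γm n i2))
    (hbd : ∀ n i2, ((p:ℤ))^n ∣ bD n i2) (hcd : ∀ n i2, cD n i2 ≠ 0)
    (hMlev : ∀ n (i2 j2 : Fin r), Lev ((p:ℤ)^n) (M n i2 j2)) :
    ∃ f : Fin r → Fin r → SD k, ∀ i j : Fin r, i < j → PairProp p r M γm bD cD f i j := by
  have H : ∀ d : ℕ, ∃ f : Fin r → Fin r → SD k,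
      (∀ i j : Fin r, i < j → (j:ℕ) - (i:ℕ) < d → PairProp p r M γm bD cD f i j) ∧
      FAll p r f := by
    intro d
    induction d with
    | zero =>
      refine ⟨fun _ _ => default, fun i j _ h => absurd h (by omega), ?_⟩
      intro a b2 _
      refine ⟨fun n => Lev.zero _, fun n => Lev.zero _, fun n => Lev.zero _, fun n m => ?_⟩
      rfl
    | succ d ih =>
      obtain ⟨f, hf, hfall⟩ := ih
      obtain ⟨f', hf', hfall'⟩ :=
        stepAll p r M γm bD cD hp hγlev hbd hcd hMlev d f hf hfall
      exact ⟨f', hf', hfall'⟩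
  obtain ⟨f, hf, _⟩ := H r
  refine ⟨f, fun i j hij => hf i j hij ?_⟩
  have := j.isLt
  omega

end Assembly


end SBEaux

open SBEaux

/-- **Key surjectivity statement (Proposition 5.7).**
Every stratified bundle on `k((t))`, presented by a sequence `Mₙ ∈ B_r(k((t))^{pⁿ})`,
extends to a stratified bundle on `𝔾ₘ`, presented by `Aₙ ∈ B_r(k[t,t⁻¹]^{pⁿ})`, which
over `k((t⁻¹)) = k((s))` is a direct sum of rank-one objects: `ι(Aₙ)` is equivalent,
via `hₙ ∈ B_r(k((s))^{pⁿ})`, to a sequence of invertible diagonal matrices `Δₙ` with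
entries in `k((s))^{pⁿ}`. -/
theorem stratified_bundle_extension_special
    (k : Type*) [Field k] [IsAlgClosed k] (p : ℕ) [CharP k p] (hp : 0 < p)
    (r : ℕ) (hr : 1 ≤ r)
    (M : ℕ → Matrix (Fin r) (Fin r) (LaurentSeries k))
    (hM : ∀ n, MemBrLaurentSeriesPow k p n r (M n)) :
    ∃ A A' : ℕ → Matrix (Fin r) (Fin r) (LaurentSeries k),
      (∀ n, MemBrLaurentPolyPow k p n r (A n)) ∧
      IsRevMatSeq k r A A' ∧
      -- (i) over `k((t))`, `A` is equivalent to `M`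
      (∃ g : ℕ → Matrix (Fin r) (Fin r) (LaurentSeries k),
        (∀ n, MemBrLaurentSeriesPow k p n r (g n)) ∧
        ∀ n, M n = g n * A n * (g (n + 1))⁻¹) ∧
      -- (ii) over `k((s))`, `ι(A)` is equivalent to a diagonal sequence
      (∃ (h : ℕ → Matrix (Fin r) (Fin r) (LaurentSeries k))
         (d : ℕ → Fin r → LaurentSeries k),
        (∀ n, MemBrLaurentSeriesPow k p n r (h n)) ∧
        (∀ n (i : Fin r), d n i ≠ 0 ∧ ∀ m ∈ (d n i).support, ((p : ℤ) ^ n) ∣ m) ∧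
        ∀ n, A' n = h n * Matrix.diagonal (d n) * (h (n + 1))⁻¹) := by
  classical
  haveI : NeZero p := ⟨by omega⟩
  have hp1 : 1 < p := (CharP.char_is_prime_of_pos k p).out.one_lt
  -- diagonal normalization via core1
  have hMlev : ∀ n (i j : Fin r), Lev ((p:ℤ)^n) (M n i j) := by
    intro n i j m hm
    exact (hM n).2.1 i j m ((HahnSeries.mem_support _ _).mpr hm)
  have hdiag : ∀ i : Fin r, ∃ (γ1 : ℕ → LaurentSeries k) (b1 : ℕ → ℤ) (c1 : ℕ → k),
      (∀ n, γ1 n ≠ 0) ∧ (∀ n, Lev ((p:ℤ)^n) (γ1 n)) ∧ (∀ n, c1 n ≠ 0) ∧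
      (∀ n, ((p:ℤ))^n ∣ b1 n) ∧
      (∀ n, M n i i * γ1 (n+1) = γ1 n * HahnSeries.single (b1 n) (c1 n)) := by
    intro i
    exact core1 p hp1 (fun n => M n i i) (fun n => (hM n).2.2 i) (fun n => hMlev n i i)
  choose γf bf cf hγne0 hγlev0 hcne0 hbdvd0 hγrel0 using hdiag
  set γm : ℕ → Fin r → LaurentSeries k := fun n i => γf i n with hγmdef
  set bD : ℕ → Fin r → ℤ := fun n i => bf i n with hbDdef
  set cD : ℕ → Fin r → k := fun n i => cf i n with hcDdef
  have hγne : ∀ n (i : Fin r), γm n i ≠ 0 := fun n i => hγne0 i n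
  have hγlev : ∀ n (i : Fin r), Lev ((p:ℤ)^n) (γm n i) := fun n i => hγlev0 i n
  have hcne : ∀ n (i : Fin r), cD n i ≠ 0 := fun n i => hcne0 i n
  have hbdvd : ∀ n (i : Fin r), ((p:ℤ))^n ∣ bD n i := fun n i => hbdvd0 i n
  have hγrel : ∀ n (i : Fin r),
      M n i i * γm (n+1) i = γm n i * HahnSeries.single (bD n i) (cD n i) :=
    fun n i => hγrel0 i n
  have hMut : ∀ n (i j : Fin r), (j:ℕ) < (i:ℕ) → M n i j = 0 := fun n => (hM n).1
  obtain ⟨f, hfP⟩ := buildAll p r M γm bD cD hp1 hγlev hbdvd hcne hMlev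
  have hfin : ∀ i j : Fin r, i < j → ∀ n, ((f i j).z n).support.Finite :=
    fun i j h => (hfP i j h).1
  have hzlev : ∀ i j : Fin r, i < j → ∀ n, Lev ((p:ℤ)^n) ((f i j).z n) :=
    fun i j h => (hfP i j h).2.1
  have hmir : ∀ i j : Fin r, i < j → ∀ n m, ((f i j).z' n).coeff m = ((f i j).z n).coeff (-m) :=
    fun i j h => (hfP i j h).2.2.1
  have hvlev : ∀ i j : Fin r, i < j → ∀ n, Lev ((p:ℤ)^n) ((f i j).v n) :=
    fun i j h => (hfP i j h).2.2.2.1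
  have hwlev : ∀ i j : Fin r, i < j → ∀ n, Lev ((p:ℤ)^n) ((f i j).w n) :=
    fun i j h => (hfP i j h).2.2.2.2.1
  have heqt : ∀ i j : Fin r, i < j → ∀ n,
      (f i j).v n * HahnSeries.single (bD n j) (cD n j)
        - HahnSeries.single (bD n i) (cD n i) * (f i j).v (n+1)
      = XX r M γm bD cD f i j n - (f i j).z n :=
    fun i j h => (hfP i j h).2.2.2.2.2.1
  have heqs : ∀ i j : Fin r, i < j → ∀ n,
      (f i j).w n * HahnSeries.single (-(bD n j)) (cD n j)
        - HahnSeries.single (-(bD n i)) (cD n i) * (f i j).w (n+1)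
      = (f i j).z' n + XX' r bD cD f i j n :=
    fun i j h => (hfP i j h).2.2.2.2.2.2
  -- the matrices
  set gmat : ℕ → Matrix (Fin r) (Fin r) (LaurentSeries k) :=
    fun n => Matrix.of fun i j => gg r γm f n i j with hgmat
  set Amat : ℕ → Matrix (Fin r) (Fin r) (LaurentSeries k) :=
    fun n => Matrix.of fun i j => AA r bD cD f n i j with hAmat
  set A'mat : ℕ → Matrix (Fin r) (Fin r) (LaurentSeries k) :=
    fun n => Matrix.of fun i j => AAr r bD cD f n i j with hA'mat
  set hmat : ℕ → Matrix (Fin r) (Fin r) (LaurentSeries k) :=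
    fun n => Matrix.of fun i j => hh r f n i j with hhmat
  set dvec : ℕ → Fin r → LaurentSeries k :=
    fun n i => HahnSeries.single (-(bD n i)) (cD n i) with hdvec
  have hgme : ∀ n (a b2 : Fin r), gmat n a b2 = gg r γm f n a b2 := fun _ _ _ => rfl
  have hAme : ∀ n (a b2 : Fin r), Amat n a b2 = AA r bD cD f n a b2 := fun _ _ _ => rfl
  have hA'me : ∀ n (a b2 : Fin r), A'mat n a b2 = AAr r bD cD f n a b2 := fun _ _ _ => rfl
  have hhme : ∀ n (a b2 : Fin r), hmat n a b2 = hh r f n a b2 := fun _ _ _ => rfl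
  -- basic entry computations
  have hggd : ∀ n (i : Fin r), gg r γm f n i i = γm n i := by
    intro n i; unfold gg; rw [if_pos rfl]
  have hggu : ∀ n (i j : Fin r), i < j → gg r γm f n i j = γm n i * (f i j).v n := by
    intro n i j h; unfold gg; rw [if_neg (Fin.ne_of_lt h), if_pos h]
  have hggz : ∀ n (i j : Fin r), (j:ℕ) < (i:ℕ) → gg r γm f n i j = 0 := by
    intro n i j h; unfold gg
    rw [if_neg (by intro he; subst he; omega), if_neg (by intro hc; rw [Fin.lt_def] at hc; omega)]
  have hAAd : ∀ n (i : Fin r), AA r bD cD f n i i = HahnSeries.single (bD n i) (cD n i) := by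
    intro n i; unfold AA; rw [if_pos rfl]
  have hAAu : ∀ n (i j : Fin r), i < j → AA r bD cD f n i j = (f i j).z n := by
    intro n i j h; unfold AA; rw [if_neg (Fin.ne_of_lt h), if_pos h]
  have hAAz : ∀ n (i j : Fin r), (j:ℕ) < (i:ℕ) → AA r bD cD f n i j = 0 := by
    intro n i j h; unfold AA
    rw [if_neg (by intro he; subst he; omega), if_neg (by intro hc; rw [Fin.lt_def] at hc; omega)]
  have hAArd : ∀ n (i : Fin r), AAr r bD cD f n i i = HahnSeries.single (-(bD n i)) (cD n i) := by
    intro n i; unfold AAr; rw [if_pos rfl]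
  have hAAru : ∀ n (i j : Fin r), i < j → AAr r bD cD f n i j = (f i j).z' n := by
    intro n i j h; unfold AAr; rw [if_neg (Fin.ne_of_lt h), if_pos h]
  have hAArz : ∀ n (i j : Fin r), (j:ℕ) < (i:ℕ) → AAr r bD cD f n i j = 0 := by
    intro n i j h; unfold AAr
    rw [if_neg (by intro he; subst he; omega), if_neg (by intro hc; rw [Fin.lt_def] at hc; omega)]
  have hhhd : ∀ n (i : Fin r), hh r f n i i = 1 := by
    intro n i; unfold hh; rw [if_pos rfl]
  have hhhu : ∀ n (i j : Fin r), i < j → hh r f n i j = (f i j).w n := by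
    intro n i j h; unfold hh; rw [if_neg (Fin.ne_of_lt h), if_pos h]
  have hhhz : ∀ n (i j : Fin r), (j:ℕ) < (i:ℕ) → hh r f n i j = 0 := by
    intro n i j h; unfold hh
    rw [if_neg (by intro he; subst he; omega), if_neg (by intro hc; rw [Fin.lt_def] at hc; omega)]
  -- E1 : M n * g (n+1) = g n * A n
  have hE1 : ∀ n, M n * gmat (n+1) = gmat n * Amat n := by
    intro n
    apply Matrix.ext
    intro i j
    rw [Matrix.mul_apply, Matrix.mul_apply]
    simp only [hgme, hAme]
    rcases lt_trichotomy (i:ℕ) (j:ℕ) with hij | hij | hij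
    · -- i < j : the main case
      have hijf : i < j := by rw [Fin.lt_def]; omega
      have hsplitL : ∀ k2 : Fin r, M n i k2 * gg r γm f (n+1) k2 j
          = (if k2 = i then M n i i * gg r γm f (n+1) i j else 0)
            + (if i < k2 then M n i k2 * gg r γm f (n+1) k2 j else 0) := by
        intro k2
        rcases lt_trichotomy (k2:ℕ) (i:ℕ) with h | h | h
        · rw [if_neg (by intro he; subst he; omega),
            if_neg (by intro hc; rw [Fin.lt_def] at hc; omega),
            hMut n i k2 h, zero_mul, add_zero]
        · have : k2 = i := Fin.ext h
          subst this
          rw [if_pos rfl, if_neg (lt_irrefl _), add_zero]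
        · rw [if_neg (by intro he; subst he; omega), if_pos (by rw [Fin.lt_def]; omega), zero_add]
      have hsplitR : ∀ l : Fin r, gg r γm f n i l * AA r bD cD f n l j
          = (if l = i then γm n i * AA r bD cD f n i j else 0)
            + (if l = j then gg r γm f n i j * HahnSeries.single (bD n j) (cD n j) else 0)
            + (if i < l ∧ l < j then gg r γm f n i l * AA r bD cD f n l j else 0) := by
        intro l
        rcases lt_trichotomy (l:ℕ) (i:ℕ) with h | h | h
        · rw [hggz n i l h, zero_mul, if_neg (by intro he; subst he; omega),
            if_neg (by intro he; subst he; omega),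
            if_neg (by intro hc; rw [Fin.lt_def, Fin.lt_def] at hc; omega)]
          ring
        · have : l = i := Fin.ext h
          subst this
          rw [if_pos rfl, hggd, if_neg (by intro he; subst he; omega),
            if_neg (by intro hc; rw [Fin.lt_def, Fin.lt_def] at hc; omega)]
          ring
        · rcases lt_trichotomy (l:ℕ) (j:ℕ) with h2 | h2 | h2
          · rw [if_neg (by intro he; subst he; omega), if_neg (by intro he; subst he; omega),
              if_pos ⟨by rw [Fin.lt_def]; omega, by rw [Fin.lt_def]; omega⟩]
            ring
          · have : l = j := Fin.ext h2
            subst this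
            rw [if_neg (by intro he; subst he; omega), if_pos rfl, hAAd,
              if_neg (by intro hc; rw [Fin.lt_def, Fin.lt_def] at hc; omega)]
            ring
          · rw [hAAz n l j h2, mul_zero, if_neg (by intro he; subst he; omega),
              if_neg (by intro he; subst he; omega),
              if_neg (by intro hc; rw [Fin.lt_def, Fin.lt_def] at hc; omega)]
            ring
      rw [Finset.sum_congr rfl (fun k2 _ => hsplitL k2),
        Finset.sum_congr rfl (fun l _ => hsplitR l)]
      rw [Finset.sum_add_distrib, Finset.sum_add_distrib, Finset.sum_add_distrib]
      simp only [Finset.sum_ite_eq', Finset.mem_univ, if_true]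
      have heq6 := heqt i j hijf n
      have hXXe : XX r M γm bD cD f i j n
          = (γm n i)⁻¹ *
            ((∑ k2 : Fin r, if i < k2 then M n i k2 * gg r γm f (n+1) k2 j else 0)
              - (∑ l : Fin r, if i < l ∧ l < j then gg r γm f n i l * AA r bD cD f n l j else 0)) :=
        rfl
      have hkey : γm n i * ((f i j).v n * HahnSeries.single (bD n j) (cD n j))
            - γm n i * (HahnSeries.single (bD n i) (cD n i) * (f i j).v (n+1))
          = ((∑ k2 : Fin r, if i < k2 then M n i k2 * gg r γm f (n+1) k2 j else 0)
              - (∑ l : Fin r, if i < l ∧ l < j then gg r γm f n i l * AA r bD cD f n l j else 0))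
            - γm n i * (f i j).z n := by
        rw [← mul_sub, heq6, mul_sub, hXXe, ← mul_assoc, mul_inv_cancel₀ (hγne n i), one_mul]
      rw [hggu (n+1) i j hijf, hggu n i j hijf, hAAu n i j hijf]
      linear_combination (f i j).v (n+1) * hγrel n i - hkey
    · -- i = j
      have : i = j := Fin.ext hij
      subst this
      have h1 : (∑ k2 : Fin r, M n i k2 * gg r γm f (n+1) k2 i) = M n i i * γm (n+1) i := by
        rw [Finset.sum_eq_single i]
        · rw [hggd]
        · intro k2 _ hk2
          rcases lt_or_gt_of_ne (fun he : (k2:ℕ) = (i:ℕ) => hk2 (Fin.ext he)) with h | h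
          · rw [hMut n i k2 h, zero_mul]
          · rw [hggz (n+1) k2 i h, mul_zero]
        · intro h; exact absurd (Finset.mem_univ i) h
      have h2 : (∑ l : Fin r, gg r γm f n i l * AA r bD cD f n l i)
          = γm n i * HahnSeries.single (bD n i) (cD n i) := by
        rw [Finset.sum_eq_single i]
        · rw [hggd, hAAd]
        · intro l _ hl
          rcases lt_or_gt_of_ne (fun he : (l:ℕ) = (i:ℕ) => hl (Fin.ext he)) with h | h
          · rw [hggz n i l h, zero_mul]
          · rw [hAAz n l i h, mul_zero]
        · intro h; exact absurd (Finset.mem_univ i) h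
      rw [h1, h2]
      exact hγrel n i
    · -- i > j
      have h1 : (∑ k2 : Fin r, M n i k2 * gg r γm f (n+1) k2 j) = 0 := by
        apply Finset.sum_eq_zero
        intro k2 _
        rcases lt_or_ge (k2:ℕ) (i:ℕ) with h | h
        · rw [hMut n i k2 h, zero_mul]
        · rw [hggz (n+1) k2 j (by omega), mul_zero]
      have h2 : (∑ l : Fin r, gg r γm f n i l * AA r bD cD f n l j) = 0 := by
        apply Finset.sum_eq_zero
        intro l _
        rcases lt_or_ge (l:ℕ) (i:ℕ) with h | h
        · rw [hggz n i l h, zero_mul]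
        · rw [hAAz n l j (by omega), mul_zero]
      rw [h1, h2]
  -- E2 : A' n * h (n+1) = h n * diagonal (dvec n)
  have hE2 : ∀ n, A'mat n * hmat (n+1) = hmat n * Matrix.diagonal (dvec n) := by
    intro n
    apply Matrix.ext
    intro i j
    rw [Matrix.mul_apply, Matrix.mul_apply]
    simp only [hA'me, hhme]
    have hR : (∑ l : Fin r, hh r f n i l * Matrix.diagonal (dvec n) l j)
        = hh r f n i j * dvec n j := by
      rw [Finset.sum_eq_single j]
      · rw [Matrix.diagonal_apply_eq]
      · intro l _ hl
        rw [Matrix.diagonal_apply_ne _ hl, mul_zero]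
      · intro h; exact absurd (Finset.mem_univ j) h
    rw [hR]
    rcases lt_trichotomy (i:ℕ) (j:ℕ) with hij | hij | hij
    · have hijf : i < j := by rw [Fin.lt_def]; omega
      have hsplit : ∀ k2 : Fin r, AAr r bD cD f n i k2 * hh r f (n+1) k2 j
          = (if k2 = i then HahnSeries.single (-(bD n i)) (cD n i) * (f i j).w (n+1) else 0)
            + (if k2 = j then (f i j).z' n else 0)
            + (if i < k2 ∧ k2 < j then AAr r bD cD f n i k2 * hh r f (n+1) k2 j else 0) := by
        intro k2
        rcases lt_trichotomy (k2:ℕ) (i:ℕ) with h | h | h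
        · rw [hAArz n i k2 h, zero_mul, if_neg (by intro he; subst he; omega),
            if_neg (by intro he; subst he; omega),
            if_neg (by intro hc; rw [Fin.lt_def, Fin.lt_def] at hc; omega)]
          ring
        · have : k2 = i := Fin.ext h
          subst this
          rw [if_pos rfl, hAArd, hhhu (n+1) k2 j hijf, if_neg (by intro he; subst he; omega),
            if_neg (by intro hc; rw [Fin.lt_def, Fin.lt_def] at hc; omega)]
          ring
        · rcases lt_trichotomy (k2:ℕ) (j:ℕ) with h2 | h2 | h2
          · rw [if_neg (by intro he; subst he; omega), if_neg (by intro he; subst he; omega),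
              if_pos ⟨by rw [Fin.lt_def]; omega, by rw [Fin.lt_def]; omega⟩]
            ring
          · have : k2 = j := Fin.ext h2
            subst this
            rw [if_neg (by intro he; subst he; omega), if_pos rfl, hAAru n i k2 hijf, hhhd,
              if_neg (by intro hc; exact absurd hc.2 (lt_irrefl _))]
            ring
          · rw [hhhz (n+1) k2 j h2, mul_zero, if_neg (by intro he; subst he; omega),
              if_neg (by intro he; subst he; omega),
              if_neg (by intro hc; rw [Fin.lt_def, Fin.lt_def] at hc; omega)]
            ring
      rw [Finset.sum_congr rfl (fun k2 _ => hsplit k2)]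
      rw [Finset.sum_add_distrib, Finset.sum_add_distrib]
      simp only [Finset.sum_ite_eq', Finset.mem_univ, if_true]
      have heq7 := heqs i j hijf n
      have hXX'e : XX' r bD cD f i j n
          = ∑ k2 : Fin r, if i < k2 ∧ k2 < j then AAr r bD cD f n i k2 * hh r f (n+1) k2 j else 0 :=
        rfl
      rw [hhhu n i j hijf]
      show HahnSeries.single (-(bD n i)) (cD n i) * (f i j).w (n+1) + (f i j).z' n
          + (∑ k2 : Fin r, if i < k2 ∧ k2 < j then AAr r bD cD f n i k2 * hh r f (n+1) k2 j else 0)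
        = (f i j).w n * HahnSeries.single (-(bD n j)) (cD n j)
      rw [← hXX'e]
      linear_combination - heq7
    · have : i = j := Fin.ext hij
      subst this
      have h1 : (∑ k2 : Fin r, AAr r bD cD f n i k2 * hh r f (n+1) k2 i)
          = HahnSeries.single (-(bD n i)) (cD n i) := by
        rw [Finset.sum_eq_single i]
        · rw [hAArd, hhhd, mul_one]
        · intro k2 _ hk2
          rcases lt_or_gt_of_ne (fun he : (k2:ℕ) = (i:ℕ) => hk2 (Fin.ext he)) with h | h
          · rw [hAArz n i k2 h, zero_mul]
          · rw [hhhz (n+1) k2 i h, mul_zero]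
        · intro h; exact absurd (Finset.mem_univ i) h
      rw [h1, hhhd, one_mul]
    · have h1 : (∑ k2 : Fin r, AAr r bD cD f n i k2 * hh r f (n+1) k2 j) = 0 := by
        apply Finset.sum_eq_zero
        intro k2 _
        rcases lt_or_ge (k2:ℕ) (i:ℕ) with h | h
        · rw [hAArz n i k2 h, zero_mul]
        · rw [hhhz (n+1) k2 j (by omega), mul_zero]
      rw [h1, hhhz n i j hij, zero_mul]
  -- invertibility
  have hdetg : ∀ n, IsUnit (gmat n).det := by
    intro n
    have hbt : (gmat n).BlockTriangular id := by
      intro i j hji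
      exact hggz n i j hji
    rw [Matrix.det_of_upperTriangular hbt]
    apply isUnit_iff_ne_zero.mpr
    apply Finset.prod_ne_zero_iff.mpr
    intro i _
    rw [hgme, hggd]
    exact hγne n i
  have hdeth : ∀ n, IsUnit (hmat n).det := by
    intro n
    have hbt : (hmat n).BlockTriangular id := by
      intro i j hji
      exact hhhz n i j hji
    rw [Matrix.det_of_upperTriangular hbt]
    apply isUnit_iff_ne_zero.mpr
    apply Finset.prod_ne_zero_iff.mpr
    intro i _
    rw [hhme, hhhd]
    exact one_ne_zero
  refine ⟨Amat, A'mat, ?_, ?_, ⟨gmat, ?_, ?_⟩, ⟨hmat, dvec, ?_, ?_, ?_⟩⟩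
  · -- MemBrLaurentPolyPow for A
    intro n
    refine ⟨?_, ?_, ?_⟩
    · intro i j hji
      exact hAAz n i j hji
    · intro i j
      constructor
      · rcases lt_trichotomy (i:ℕ) (j:ℕ) with h | h | h
        · rw [hAme, hAAu n i j (by rw [Fin.lt_def]; omega)]
          exact hfin i j (by rw [Fin.lt_def]; omega) n
        · have : i = j := Fin.ext h
          subst this
          rw [hAme, hAAd]
          exact (Set.finite_singleton _).subset HahnSeries.support_single_subset
        · rw [hAme, hAAz n i j h]
          simp
      · intro m hm
        rw [HahnSeries.mem_support] at hm
        rcases lt_trichotomy (i:ℕ) (j:ℕ) with h | h | h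
        · rw [hAme, hAAu n i j (by rw [Fin.lt_def]; omega)] at hm
          exact hzlev i j (by rw [Fin.lt_def]; omega) n m hm
        · have : i = j := Fin.ext h
          subst this
          rw [hAme, hAAd] at hm
          have : m = bD n i := by
            by_contra hc
            rw [HahnSeries.coeff_single_of_ne hc] at hm
            exact hm rfl
          rw [this]
          exact hbdvd n i
        · rw [hAme, hAAz n i j h] at hm
          simp at hm
    · intro i
      refine ⟨HahnSeries.single (-(bD n i)) ((cD n i)⁻¹), ?_, ?_, ?_⟩
      · exact (Set.finite_singleton _).subset HahnSeries.support_single_subset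
      · intro m hm
        have : m = -(bD n i) := HahnSeries.eq_of_mem_support_single hm
        rw [this]
        exact dvd_neg.mpr (hbdvd n i)
      · rw [hAme, hAAd, HahnSeries.single_mul_single, add_neg_cancel,
          mul_inv_cancel₀ (hcne n i), HahnSeries.single_zero_one]
  · -- IsRevMatSeq
    intro n i j m
    rcases lt_trichotomy (i:ℕ) (j:ℕ) with h | h | h
    · rw [hA'me, hAme, hAAru n i j (by rw [Fin.lt_def]; omega),
        hAAu n i j (by rw [Fin.lt_def]; omega)]
      exact hmir i j (by rw [Fin.lt_def]; omega) n m
    · have : i = j := Fin.ext h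
      subst this
      rw [hA'me, hAme, hAArd, hAAd]
      by_cases hm : m = -(bD n i)
      · subst hm
        rw [HahnSeries.coeff_single_same, neg_neg, HahnSeries.coeff_single_same]
      · rw [HahnSeries.coeff_single_of_ne hm, HahnSeries.coeff_single_of_ne (by omega)]
    · rw [hA'me, hAme, hAArz n i j h, hAAz n i j h]
      simp
  · -- MemBr for g
    intro n
    refine ⟨fun i j hji => hggz n i j hji, ?_, ?_⟩
    · intro i j m hm
      rw [HahnSeries.mem_support] at hm
      rcases lt_trichotomy (i:ℕ) (j:ℕ) with h | h | h
      · rw [hgme, hggu n i j (by rw [Fin.lt_def]; omega)] at hm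
        exact (Lev.mul (hγlev n i) (hvlev i j (by rw [Fin.lt_def]; omega) n)) m hm
      · have : i = j := Fin.ext h
        subst this
        rw [hgme, hggd] at hm
        exact hγlev n i m hm
      · rw [hgme, hggz n i j h] at hm
        simp at hm
    · intro i
      rw [hgme, hggd]
      exact hγne n i
  · -- M n = g n * A n * (g (n+1))⁻¹
    intro n
    haveI := (gmat (n+1)).invertibleOfIsUnitDet (hdetg (n+1))
    exact ((Matrix.mul_inv_eq_iff_eq_mul_of_invertible (gmat (n+1)) (gmat n * Amat n)
      (M n)).mpr (hE1 n).symm).symm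
  · -- MemBr for h
    intro n
    refine ⟨fun i j hji => hhhz n i j hji, ?_, ?_⟩
    · intro i j m hm
      rw [HahnSeries.mem_support] at hm
      rcases lt_trichotomy (i:ℕ) (j:ℕ) with h | h | h
      · rw [hhme, hhhu n i j (by rw [Fin.lt_def]; omega)] at hm
        exact hwlev i j (by rw [Fin.lt_def]; omega) n m hm
      · have : i = j := Fin.ext h
        subst this
        rw [hhme, hhhd] at hm
        rw [HahnSeries.coeff_one] at hm
        have : m = 0 := by
          by_contra hc
          rw [if_neg hc] at hm
          exact hm rfl
        rw [this]
        exact dvd_zero _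
      · rw [hhme, hhhz n i j h] at hm
        simp at hm
    · intro i
      rw [hhme, hhhd]
      exact one_ne_zero
  · -- d conditions
    intro n i
    constructor
    · exact HahnSeries.single_ne_zero (hcne n i)
    · intro m hm
      have : m = -(bD n i) := HahnSeries.eq_of_mem_support_single hm
      rw [this]
      exact dvd_neg.mpr (hbdvd n i)
  · -- A' n = h n * diagonal d * (h (n+1))⁻¹
    intro n
    haveI := (hmat (n+1)).invertibleOfIsUnitDet (hdeth (n+1))
    exact ((Matrix.mul_inv_eq_iff_eq_mul_of_invertible (hmat (n+1))
      (hmat n * Matrix.diagonal (dvec n)) (A'mat n)).mpr (hE2 n).symm).symm
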